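/- arXiv:2404.00446 — 2 statements merged into one kernel-verified Lean document; each statement's English description precedes it below -/
import Mathlib

section
/- The causality relation ≤ on g-events, defined by [σ] ≤ [σ·σ'] (whenever both are g-events), is a partial order: it is reflexive, transitive, and antisymmetric. -/
structure Comm (P L : Type) where
  sender : P
  receiver : P
  label : L

def play {P L : Type} (α : Comm P L) : Set P := {α.sender, α.receiver}

abbrev Trace (P L : Type) := List (Comm P L)

def playT {P L : Type} : Trace P L → Set P
  | [] => ∅
  | α :: σ => play α ∪ playT σ

/-- Permutation equivalence: least equivalence relation swapping adjacent
communications with disjoint participant sets. -/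
inductive PermEq {P L : Type} : Trace P L → Trace P L → Prop
  | swap (σ σ' : Trace P L) (α α' : Comm P L) (h : play α ∩ play α' = ∅) :
      PermEq (σ ++ α :: α' :: σ') (σ ++ α' :: α :: σ')
  | refl (σ : Trace P L) : PermEq σ σ
  | symm {σ σ' : Trace P L} : PermEq σ σ' → PermEq σ' σ
  | trans {σ σ' σ'' : Trace P L} : PermEq σ σ' → PermEq σ' σ'' → PermEq σ σ''

/-- A non-empty trace is pointed if every communication except the last shares
a participant with some later communication in the trace. -/
def IsPointed {P L : Type} (σ : Trace P L) : Prop :=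
  σ ≠ [] ∧ ∀ i (hi : i + 1 < σ.length),
    ∃ j, i < j ∧ ∃ hj : j < σ.length,
      (play (σ.get ⟨i, by omega⟩) ∩ play (σ.get ⟨j, hj⟩)).Nonempty

instance permSetoid (P L : Type) : Setoid (Trace P L) :=
  ⟨PermEq, ⟨PermEq.refl, PermEq.symm, PermEq.trans⟩⟩

/-- G-events live in the quotient of traces by permutation equivalence. -/
abbrev GEvent (P L : Type) := Quotient (permSetoid P L)

/-- A g-event proper is the class of a pointed trace. -/
def IsGEvent {P L : Type} (γ : GEvent P L) : Prop :=
  ∃ σ : Trace P L, IsPointed σ ∧ γ = ⟦σ⟧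

open Classical in
/-- Causal prefixing on traces: prepend `α` iff its participants meet those of `σ`. -/
noncomputable def cpre {P L : Type} (α : Comm P L) (σ : Trace P L) : Trace P L :=
  if (play α ∩ playT σ).Nonempty then α :: σ else σ

/-- `evFull σ` is (a canonical representative of) the g-event generated by `σ`. -/
noncomputable def evFull {P L : Type} : Trace P L → Trace P L
  | [] => []
  | [α] => [α]
  | α :: β :: σ => cpre α (evFull (β :: σ))

lemma playT_append {P L : Type} (σ τ : Trace P L) :
    playT (σ ++ τ) = playT σ ∪ playT τ := by
  induction σ with
  | nil => simp [playT]
  | cons α σ ih => simp [playT, ih, Set.union_assoc]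

lemma PermEq.playT_eq {P L : Type} {σ σ' : Trace P L} (h : PermEq σ σ') :
    playT σ = playT σ' := by
  induction h with
  | swap σ σ' α α' h =>
      simp [playT_append, playT, Set.union_left_comm, Set.union_comm, Set.union_assoc]
  | refl => rfl
  | symm _ ih => exact ih.symm
  | trans _ _ ih1 ih2 => exact ih1.trans ih2

lemma PermEq.cons {P L : Type} {σ σ' : Trace P L} (α : Comm P L) (h : PermEq σ σ') :
    PermEq (α :: σ) (α :: σ') := by
  induction h with
  | swap τ τ' β β' hd => exact PermEq.swap (α :: τ) τ' β β' hd
  | refl => exact PermEq.refl _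
  | symm _ ih => exact ih.symm
  | trans _ _ ih1 ih2 => exact ih1.trans ih2

/-- Causal prefixing of a g-event by a communication. -/
noncomputable def cprefix {P L : Type} (α : Comm P L) : GEvent P L → GEvent P L :=
  Quotient.map (cpre α) (by
    intro σ σ' h
    by_cases hc : (play α ∩ playT σ').Nonempty
    · simpa [cpre, h.playT_eq, hc] using (show α :: σ ≈ α :: σ' from PermEq.cons α h)
    · simpa [cpre, h.playT_eq, hc] using h)

/-- Causal prefixing of a g-event by a trace. -/
noncomputable def cprefixT {P L : Type} : Trace P L → GEvent P L → GEvent P L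
  | [], γ => γ
  | α :: σ, γ => cprefix α (cprefixT σ γ)

/-- Causality on g-events. -/
def GCause {P L : Type} (γ γ' : GEvent P L) : Prop :=
  ∃ σ σ' : Trace P L, γ = ⟦σ⟧ ∧ γ' = ⟦σ ++ σ'⟧

/-- Conflict on g-events. -/
def GConflict {P L : Type} (γ γ' : GEvent P L) : Prop :=
  ∃ (σ σ₁ σ₂ : Trace P L) (p q : P) (l₁ l₂ : L), l₁ ≠ l₂ ∧
    γ = ⟦σ ++ ⟨p, q, l₁⟩ :: σ₁⟧ ∧ γ' = ⟦σ ++ ⟨p, q, l₂⟩ :: σ₂⟧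

lemma PermEq.length_eq {P L : Type} {σ σ' : Trace P L} (h : PermEq σ σ') :
    σ.length = σ'.length := by
  induction h with
  | swap τ τ' β β' hd => simp
  | refl => rfl
  | symm _ ih => exact ih.symm
  | trans _ _ ih1 ih2 => exact ih1.trans ih2

lemma PermEq.append_right {P L : Type} {σ σ' : Trace P L} (h : PermEq σ σ')
    (τ : Trace P L) : PermEq (σ ++ τ) (σ' ++ τ) := by
  induction h with
  | swap ρ ρ' β β' hd =>
      simpa [List.append_assoc] using
        PermEq.swap ρ (ρ' ++ τ) β β' hd
  | refl => exact PermEq.refl _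
  | symm _ ih => exact ih.symm
  | trans _ _ ih1 ih2 => exact ih1.trans ih2

/-- the causality relation on g-events is a partial order:
reflexive, transitive and antisymmetric. -/
theorem gcause_partialOrder (P L : Type) :
    (∀ γ : GEvent P L, IsGEvent γ → GCause γ γ) ∧
    (∀ γ γ' γ'' : GEvent P L, IsGEvent γ → IsGEvent γ' → IsGEvent γ'' →
      GCause γ γ' → GCause γ' γ'' → GCause γ γ'') ∧
    (∀ γ γ' : GEvent P L, IsGEvent γ → IsGEvent γ' →
      GCause γ γ' → GCause γ' γ → γ = γ') := by
  refine ⟨fun γ _ => ?_, fun γ γ' γ'' _ _ _ h1 h2 => ?_, fun γ γ' _ _ h1 h2 => ?_⟩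
  · obtain ⟨σ, rfl⟩ := Quotient.exists_rep γ
    exact ⟨σ, [], rfl, by simp⟩
  · obtain ⟨σ, σ', hσ, hσ'⟩ := h1
    obtain ⟨τ, τ', hτ, hτ'⟩ := h2
    refine ⟨σ, σ' ++ τ', hσ, ?_⟩
    have he : PermEq (σ ++ σ') τ := Quotient.exact (hσ'.symm.trans hτ)
    rw [hτ', ← List.append_assoc]
    exact Quotient.sound (he.append_right τ').symm
  · obtain ⟨σ, σ', hσ, hσ'⟩ := h1
    obtain ⟨τ, τ', hτ, hτ'⟩ := h2
    have e1 : PermEq (σ ++ σ') τ := Quotient.exact (hσ'.symm.trans hτ)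
    have e2 : PermEq (τ ++ τ') σ := Quotient.exact (hτ'.symm.trans hσ)
    have l1 := e1.length_eq
    have l2 := e2.length_eq
    simp only [List.length_append] at l1 l2
    have : σ' = [] := List.eq_nil_of_length_eq_zero (by omega)
    subst this
    rw [hσ, hσ', List.append_nil]
end

section
/- Causality and conflict on g-events are mutually exclusive: if γ ≤ γ' then ¬(γ # γ'). -/
open Classical in
/-- Subsequence of communications involving participant `p`. -/
noncomputable def filtP {P L : Type} (p : P) (σ : Trace P L) : Trace P L :=
  σ.filter (fun α => decide (p ∈ play α))

lemma filtP_append {P L : Type} (p : P) (σ τ : Trace P L) :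
    filtP p (σ ++ τ) = filtP p σ ++ filtP p τ := by
  simp [filtP]

lemma PermEq.filtP_eq {P L : Type} (p : P) {σ σ' : Trace P L} (h : PermEq σ σ') :
    filtP p σ = filtP p σ' := by
  induction h with
  | swap σ σ' α α' hd =>
      have hnot : ¬ (p ∈ play α ∧ p ∈ play α') := by
        intro ⟨h1, h2⟩
        have : p ∈ play α ∩ play α' := ⟨h1, h2⟩
        rw [hd] at this; exact this
      simp only [filtP_append]
      congr 1
      by_cases h1 : p ∈ play α <;> by_cases h2 : p ∈ play α' <;>
        simp [filtP, h1, h2] <;> exact absurd ⟨h1, h2⟩ hnot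
  | refl => rfl
  | symm _ ih => exact ih.symm
  | trans _ _ ih1 ih2 => exact ih1.trans ih2

/-- causality and conflict on g-events are mutually exclusive. -/
theorem gcause_not_gconflict {P L : Type} (γ γ' : GEvent P L)
    (h1 : IsGEvent γ) (h2 : IsGEvent γ')
    (hle : GCause γ γ') : ¬ GConflict γ γ' := by
  rintro ⟨τ, τ₁, τ₂, p, q, l₁, l₂, hne, hγ, hγ'⟩
  obtain ⟨σ, σ', hσ, hσ'⟩ := hle
  have e1 : PermEq σ (τ ++ ⟨p, q, l₁⟩ :: τ₁) := Quotient.exact (hσ ▸ hγ)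
  have e2 : PermEq (σ ++ σ') (τ ++ ⟨p, q, l₂⟩ :: τ₂) := Quotient.exact (hσ' ▸ hγ')
  have hp1 : p ∈ play (⟨p, q, l₁⟩ : Comm P L) := Or.inl rfl
  have hp2 : p ∈ play (⟨p, q, l₂⟩ : Comm P L) := Or.inl rfl
  have f1 := e1.filtP_eq p
  have f2 := e2.filtP_eq p
  rw [filtP_append, filtP_append] at f2
  rw [filtP_append] at f1
  rw [f1] at f2
  have : filtP p (⟨p, q, l₁⟩ :: τ₁) ++ filtP p σ' = filtP p (⟨p, q, l₂⟩ :: τ₂) := by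
    have := List.append_cancel_left (f2.symm.trans (by rw [List.append_assoc]))
    exact this.symm
  simp only [filtP, List.filter_cons, decide_eq_true_eq, hp1, hp2, if_pos] at this
  simp only [List.cons_append, List.cons.injEq, Comm.mk.injEq] at this
  exact hne this.1.2.2
end
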